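/- Let $V_0 = \mathbb{C}^n$, $V_1 = \mathbb{C}^m$, $r \ge s \ge 0$ with $\delta = \max(m-n+r-s, 0)$, and suppose $(f, g, R_0, R_1)$ is a tuple where $R_0 \subseteq V_0$ has dimension $r$, $R_1 \subseteq V_1$ has dimension $s$, $f\colon V_0 \to V_1$ satisfies $f(R_0) \subseteq R_1$ and $\mathrm{rank}(f) \le m-\delta$, and $g\colon V_1 \to V_0$ satisfies $g(R_1) \subseteq R_0$. Then the characteristic polynomial $p(u)$ of $fg|_{R_1}$ (noting $fg$ preserves $R_1$) divides $\bar{\chi}(u) = u^{-\delta}\det(u - fg)$. -/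

import Mathlib

open Polynomial Module LinearMap Submodule

/-- Characteristic polynomial of a "block upper triangular" endomorphism of a product. -/
lemma aux_charpoly_tri {K M₁ M₂ : Type*} [Field K] [AddCommGroup M₁] [AddCommGroup M₂]
    [Module K M₁] [Module K M₂] [FiniteDimensional K M₁] [FiniteDimensional K M₂]
    (ψ : (M₁ × M₂) →ₗ[K] (M₁ × M₂)) (h : ∀ x : M₁, (ψ (x, 0)).2 = 0) :
    ψ.charpoly = (fst K M₁ M₂ ∘ₗ ψ ∘ₗ inl K M₁ M₂).charpoly *
      (snd K M₁ M₂ ∘ₗ ψ ∘ₗ inr K M₁ M₂).charpoly := by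
  classical
  let b₁ := finBasis K M₁
  let b₂ := finBasis K M₂
  rw [← charpoly_toMatrix ψ (b₁.prod b₂),
      ← charpoly_toMatrix (fst K M₁ M₂ ∘ₗ ψ ∘ₗ inl K M₁ M₂) b₁,
      ← charpoly_toMatrix (snd K M₁ M₂ ∘ₗ ψ ∘ₗ inr K M₁ M₂) b₂]
  have hM : toMatrix (b₁.prod b₂) (b₁.prod b₂) ψ =
      Matrix.fromBlocks (toMatrix b₁ b₁ (fst K M₁ M₂ ∘ₗ ψ ∘ₗ inl K M₁ M₂))
        (Matrix.of fun i j => (b₁.prod b₂).repr (ψ ((b₁.prod b₂) (Sum.inr j))) (Sum.inl i)) 0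
        (toMatrix b₂ b₂ (snd K M₁ M₂ ∘ₗ ψ ∘ₗ inr K M₁ M₂)) := by
    ext i j
    have ha : ∀ j, (b₁.prod b₂) (Sum.inl j) = ((b₁ j : M₁), (0 : M₂)) := fun j =>
      Prod.ext (Basis.prod_apply_inl_fst b₁ b₂ j) (Basis.prod_apply_inl_snd b₁ b₂ j)
    have hb : ∀ j, (b₁.prod b₂) (Sum.inr j) = ((0 : M₁), (b₂ j : M₂)) := fun j =>
      Prod.ext (Basis.prod_apply_inr_fst b₁ b₂ j) (Basis.prod_apply_inr_snd b₁ b₂ j)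
    rcases i with i | i <;> rcases j with j | j <;>
      simp [toMatrix_apply, Basis.prod_repr_inl, Basis.prod_repr_inr, ha, hb, h]
  rw [hM, Matrix.charpoly_fromBlocks_zero₂₁]

/-- Characteristic polynomial of an endomorphism preserving a subspace, in terms of its
restriction and the compression to a complement. -/
lemma aux_charpoly_compl {K V : Type*} [Field K] [AddCommGroup V] [Module K V]
    [FiniteDimensional K V] (φ : V →ₗ[K] V) (p q : Submodule K V) (hpq : IsCompl p q)
    (hp : ∀ x ∈ p, φ x ∈ p) :
    φ.charpoly = (φ.restrict hp).charpoly *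
      ((snd K p q ∘ₗ (prodEquivOfIsCompl p q hpq).symm.toLinearMap) ∘ₗ φ ∘ₗ q.subtype).charpoly
    := by
  classical
  set e := prodEquivOfIsCompl p q hpq with he
  have h1 : φ = e.conj (e.symm.conj φ) := by
    ext x; simp [LinearEquiv.conj_apply]
  have htri : ∀ x : p, ((e.symm.conj φ) (x, 0)).2 = 0 := by
    intro x
    have hx : e.symm.symm (x, 0) = (x : V) := by
      rw [LinearEquiv.symm_symm, coe_prodEquivOfIsCompl']; simp
    simp only [LinearEquiv.conj_apply, LinearMap.comp_apply, LinearEquiv.coe_coe, hx]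
    exact (prodEquivOfIsCompl_symm_apply_snd_eq_zero p q hpq).2 (hp _ x.2)
  have hfst : fst K p q ∘ₗ (e.symm.conj φ) ∘ₗ inl K p q = φ.restrict hp := by
    ext x
    have hx : e (x, 0) = (x : V) := by rw [coe_prodEquivOfIsCompl']; simp
    have : e.symm (φ (x : V)) = ((⟨φ (x : V), hp _ x.2⟩ : p), 0) :=
      prodEquivOfIsCompl_symm_apply_left (p := p) (q := q) hpq (⟨φ (x : V), hp _ x.2⟩ : p)
    simp [LinearEquiv.conj_apply, hx, this, LinearMap.restrict_apply]
  have hsnd : snd K p q ∘ₗ (e.symm.conj φ) ∘ₗ inr K p q =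
      (snd K p q ∘ₗ (prodEquivOfIsCompl p q hpq).symm.toLinearMap) ∘ₗ φ ∘ₗ q.subtype := by
    ext x
    have hx : e (0, x) = (x : V) := by rw [coe_prodEquivOfIsCompl']; simp
    simp [LinearEquiv.conj_apply, hx]
    rw [he, prodEquivOfIsCompl_symm_apply]; rfl
  conv_lhs => rw [h1]
  rw [LinearEquiv.charpoly_conj, aux_charpoly_tri _ htri, hfst, hsnd]

set_option synthInstance.maxHeartbeats 1000000 in
/-- Let `V₀ = ℂ^n`, `V₁ = ℂ^m`, `r ≥ s ≥ 0` and `δ = max(m - n + r - s, 0)`. Suppose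
`R₀ ⊆ V₀` has dimension `r`, `R₁ ⊆ V₁` has dimension `s`, `f : V₀ → V₁` satisfies
`f(R₀) ⊆ R₁` and `rank f ≤ m - δ`, and `g : V₁ → V₀` satisfies `g(R₁) ⊆ R₀` (so that
`f ∘ g` preserves `R₁`). Then, writing `charpoly(f∘g) = u^δ · χ̄(u)`, the characteristic
polynomial of `(f ∘ g)|_{R₁}` divides `χ̄`. -/
theorem stmt13 (n m r s : ℕ) (hrs : s ≤ r)
    (f : (Fin n → ℂ) →ₗ[ℂ] (Fin m → ℂ)) (g : (Fin m → ℂ) →ₗ[ℂ] (Fin n → ℂ))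
    (R0 : Submodule ℂ (Fin n → ℂ)) (R1 : Submodule ℂ (Fin m → ℂ))
    (hR0 : Module.finrank ℂ R0 = r) (hR1 : Module.finrank ℂ R1 = s)
    (hfR : ∀ x ∈ R0, f x ∈ R1) (hgR : ∀ y ∈ R1, g y ∈ R0)
    (hrank : Module.finrank ℂ (LinearMap.range f) ≤ m - (m + r - (n + s)))
    (hfg : ∀ y ∈ R1, (f ∘ₗ g) y ∈ R1) :
    ∃ chibar : Polynomial ℂ,
      (f ∘ₗ g).charpoly = Polynomial.X ^ (m + r - (n + s)) * chibar ∧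
      ((f ∘ₗ g).restrict hfg).charpoly ∣ chibar := by
  classical
  obtain ⟨q, hpq⟩ := Submodule.exists_isCompl R1
  set φ := f ∘ₗ g with hφ
  set π : (Fin m → ℂ) →ₗ[ℂ] q :=
    snd ℂ R1 q ∘ₗ (prodEquivOfIsCompl R1 q hpq).symm.toLinearMap with hπ
  set h : q →ₗ[ℂ] q := π ∘ₗ φ ∘ₗ q.subtype with hh
  have hmul : φ.charpoly = (φ.restrict hfg).charpoly * h.charpoly :=
    aux_charpoly_compl φ R1 q hpq hfg
  -- dimension bookkeeping
  have hq : s + finrank ℂ q = m := by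
    have := Submodule.finrank_add_eq_of_isCompl hpq
    rwa [hR1, finrank_fin_fun] at this
  have hπf_ker : R0 ≤ LinearMap.ker (π ∘ₗ f) := by
    intro x hx
    rw [LinearMap.mem_ker, LinearMap.comp_apply]
    exact (prodEquivOfIsCompl_symm_apply_snd_eq_zero R1 q hpq).2 (hfR x hx)
  have hrn : finrank ℂ (LinearMap.range (π ∘ₗ f)) + finrank ℂ (LinearMap.ker (π ∘ₗ f)) = n := by
    have := (π ∘ₗ f).finrank_range_add_finrank_ker
    rwa [finrank_fin_fun] at this
  have hr_le : r ≤ finrank ℂ (LinearMap.ker (π ∘ₗ f)) := by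
    rw [← hR0]; exact Submodule.finrank_mono hπf_ker
  have hrange : LinearMap.range h ≤ LinearMap.range (π ∘ₗ f) := by
    rintro _ ⟨x, rfl⟩
    exact ⟨g (q.subtype x), rfl⟩
  have hrange_le : finrank ℂ (LinearMap.range h) ≤ finrank ℂ (LinearMap.range (π ∘ₗ f)) :=
    Submodule.finrank_mono hrange
  have hrnq : finrank ℂ (LinearMap.range h) + finrank ℂ (LinearMap.ker h) = finrank ℂ q :=
    h.finrank_range_add_finrank_ker
  have hker_ge : m + r - (n + s) ≤ finrank ℂ (LinearMap.ker h) := by omega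
  -- X^δ divides the charpoly of h
  have hker_le : finrank ℂ (LinearMap.ker h) ≤ h.charpoly.natTrailingDegree := by
    rw [← LinearMap.finrank_maxGenEigenspace_zero_eq]
    refine Submodule.finrank_mono ?_
    intro x hx
    rw [Module.End.mem_maxGenEigenspace]
    exact ⟨1, by simpa using hx⟩
  have hdvd : X ^ (m + r - (n + s)) ∣ h.charpoly := by
    rw [Polynomial.X_pow_dvd_iff]
    intro d hd
    exact Polynomial.coeff_eq_zero_of_lt_natTrailingDegree (by omega)
  obtain ⟨c, hc⟩ := hdvd
  refine ⟨(φ.restrict hfg).charpoly * c, ?_, Dvd.intro _ rfl⟩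
  rw [hmul, hc]; ring
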